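/- Let β > 0 and s ≥ 0. There is a constant C depending only on β such that the following holds. If A : L × L → M₂(ℝ) is an infinite matrix with |A|_{β+} < ∞ and ζ : L → ℝ² satisfies ‖ζ‖_s < ∞, then for every c ∈ L the sum (Aζ)_c = ∑_{e ∈ L} A(c,e)·ζ_e converges absolutely, and |Aζ|_β ≤ C·|A|_{β+}·‖ζ‖_s. -/

import Mathlib

/-- Squared Euclidean norm on `ℝ²` (viewed as `Fin 2 → ℝ`). -/
def vec2NormSq (v : Fin 2 → ℝ) : ℝ := ∑ i, v i ^ 2

/-- Squared Frobenius norm of a real `2×2` matrix. -/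
def frobSq (M : Matrix (Fin 2) (Fin 2) ℝ) : ℝ := ∑ i, ∑ j, M i j ^ 2

/-- Hilbert–Schmidt norm of the block `A_{[a]}^{[b]}` of an infinite matrix
`A : L × L → M₂(ℝ)`, where `[a] = {c : w c = w a}`. -/
noncomputable def hsBlock {L : Type*} (w : L → ℕ)
    (A : L → L → Matrix (Fin 2) (Fin 2) ℝ) (a b : L) : ℝ :=
  Real.sqrt (∑' p : {c : L // w c = w a} × {d : L // w d = w b}, frobSq (A p.1.1 p.2.1))

/-- Action of an infinite matrix `A : L × L → M₂(ℝ)` on a vector `ζ : L → ℝ²`. -/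
noncomputable def infMulVec {L : Type*} (A : L → L → Matrix (Fin 2) (Fin 2) ℝ)
    (ζ : L → Fin 2 → ℝ) (c : L) : Fin 2 → ℝ :=
  fun i => ∑' e : L, (A c e).mulVec (ζ e) i

lemma frobSq_nonneg (M : Matrix (Fin 2) (Fin 2) ℝ) : 0 ≤ frobSq M :=
  Finset.sum_nonneg fun _ _ => Finset.sum_nonneg fun _ _ => sq_nonneg _

lemma vec2NormSq_nonneg (v : Fin 2 → ℝ) : 0 ≤ vec2NormSq v :=
  Finset.sum_nonneg fun _ _ => sq_nonneg _

lemma abs_mulVec_le (M : Matrix (Fin 2) (Fin 2) ℝ) (v : Fin 2 → ℝ) (i : Fin 2) :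
    |M.mulVec v i| ≤ Real.sqrt (frobSq M) * Real.sqrt (vec2NormSq v) := by
  have h1 : (M.mulVec v i) ^ 2 ≤ (∑ j, M i j ^ 2) * (∑ j, v j ^ 2) := by
    simpa [Matrix.mulVec, dotProduct] using Finset.sum_mul_sq_le_sq_mul_sq Finset.univ (M i) v
  have h2 : (∑ j, M i j ^ 2) ≤ frobSq M :=
    Finset.single_le_sum (f := fun i => ∑ j, M i j ^ 2)
      (fun _ _ => Finset.sum_nonneg fun _ _ => sq_nonneg _) (Finset.mem_univ i)
  calc |M.mulVec v i| = Real.sqrt ((M.mulVec v i) ^ 2) := (Real.sqrt_sq_eq_abs _).symm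
    _ ≤ Real.sqrt (frobSq M * vec2NormSq v) := Real.sqrt_le_sqrt
        (h1.trans (mul_le_mul_of_nonneg_right h2 (vec2NormSq_nonneg v)))
    _ = _ := Real.sqrt_mul (frobSq_nonneg M) _

lemma summable_mul_of_sq {ι : Type*} {f g : ι → ℝ} (hf : ∀ i, 0 ≤ f i) (hg : ∀ i, 0 ≤ g i)
    (hf2 : Summable fun i => f i ^ 2) (hg2 : Summable fun i => g i ^ 2) :
    Summable fun i => f i * g i := by
  refine Summable.of_nonneg_of_le (fun i => mul_nonneg (hf i) (hg i)) (fun i => ?_)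
    (((hf2.add hg2).div_const 2))
  nlinarith [sq_nonneg (f i - g i)]

lemma tsum_mul_le_sqrt_mul_sqrt {ι : Type*} {f g : ι → ℝ} (hf : ∀ i, 0 ≤ f i) (hg : ∀ i, 0 ≤ g i)
    (hf2 : Summable fun i => f i ^ 2) (hg2 : Summable fun i => g i ^ 2) :
    ∑' i, f i * g i ≤ Real.sqrt (∑' i, f i ^ 2) * Real.sqrt (∑' i, g i ^ 2) := by
  refine Summable.tsum_le_of_sum_le (summable_mul_of_sq hf hg hf2 hg2) fun s => ?_
  have h0 : (0:ℝ) ≤ ∑ i ∈ s, f i * g i := Finset.sum_nonneg fun i _ => mul_nonneg (hf i) (hg i)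
  have h1 := Finset.sum_mul_sq_le_sq_mul_sq s f g
  have h2 : ∑ i ∈ s, f i ^ 2 ≤ ∑' i, f i ^ 2 := Summable.sum_le_tsum s (fun i _ => sq_nonneg _) hf2
  have h3 : ∑ i ∈ s, g i ^ 2 ≤ ∑' i, g i ^ 2 := Summable.sum_le_tsum s (fun i _ => sq_nonneg _) hg2
  calc ∑ i ∈ s, f i * g i = Real.sqrt ((∑ i ∈ s, f i * g i) ^ 2) := (Real.sqrt_sq h0).symm
    _ ≤ Real.sqrt ((∑' i, f i ^ 2) * (∑' i, g i ^ 2)) := Real.sqrt_le_sqrt (h1.trans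
        (mul_le_mul h2 h3 (Finset.sum_nonneg fun i _ => sq_nonneg _)
          (tsum_nonneg fun _ => sq_nonneg _)))
    _ = _ := Real.sqrt_mul (tsum_nonneg fun _ => sq_nonneg _) _

noncomputable def Sg : ℝ := ∑' k : ℤ, ((1 + |(k : ℝ)|) ^ 2)⁻¹

lemma summable_gz : Summable fun k : ℤ => ((1 + |(k : ℝ)|) ^ 2)⁻¹ := by
  have hnat : Summable fun n : ℕ => ((1 + (n : ℝ)) ^ 2)⁻¹ := by
    have := (summable_nat_add_iff (f := fun n : ℕ => ((n : ℝ) ^ 2)⁻¹) 1).2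
      ((Real.summable_one_div_nat_pow (p := 2)).2 one_lt_two |>.congr (by intro n; rw [one_div]))
    exact this.congr (by intro n; push_cast; ring_nf)
  refine Summable.of_nat_of_neg (hnat.congr ?_) (hnat.congr ?_) <;> intro n <;> simp

lemma one_le_Sg : (1:ℝ) ≤ Sg := by
  have := Summable.le_tsum summable_gz 0 (fun _ _ => by positivity)
  simpa [Sg] using this

lemma Sg_nonneg : (0:ℝ) ≤ Sg := le_trans one_pos.le one_le_Sg

lemma tsum_shift_le (m : ℕ) :
    ∑' n : ℕ, ENNReal.ofReal ((1 + |(m : ℝ) - (n : ℝ)|) ^ 2)⁻¹ ≤ ENNReal.ofReal Sg := by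
  have hinj : Function.Injective (fun n : ℕ => (n : ℤ) - m) := by intro a b h; simpa using h
  have hkey : ∀ n : ℕ, ((1 + |(m : ℝ) - (n : ℝ)|) ^ 2)⁻¹ =
      ((1 + |(((n : ℤ) - m : ℤ) : ℝ)|) ^ 2)⁻¹ := by
    intro n; push_cast; rw [abs_sub_comm]
  calc ∑' n : ℕ, ENNReal.ofReal ((1 + |(m : ℝ) - (n : ℝ)|) ^ 2)⁻¹
      = ∑' n : ℕ, (fun k : ℤ => ENNReal.ofReal ((1 + |(k : ℝ)|) ^ 2)⁻¹) ((n : ℤ) - m) := by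
        refine tsum_congr fun n => ?_; rw [hkey]
    _ ≤ ∑' k : ℤ, ENNReal.ofReal ((1 + |(k : ℝ)|) ^ 2)⁻¹ :=
        ENNReal.tsum_comp_le_tsum_of_injective hinj _
    _ = ENNReal.ofReal Sg := by
        rw [Sg, ENNReal.ofReal_tsum_of_nonneg (fun _ => by positivity) summable_gz]

/-- Lemma 4.1(iii): for `β > 0` and `s ≥ 0` there is `C = C(β)` such that if
`|A|_{β+} ≤ KA` and `‖ζ‖_s ≤ Ks` then the sums defining `Aζ` converge absolutely and
`|Aζ|_β ≤ C · KA · Ks`. -/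
theorem stmt_16 (β : ℝ) (hβ : 0 < β) :
    ∃ C : ℝ, 0 < C ∧
      ∀ (s : ℝ), 0 ≤ s →
      ∀ (L : Type) (_ : Countable L) (w : L → ℕ), (∀ a, 1 ≤ w a) →
      ∀ (A : L → L → Matrix (Fin 2) (Fin 2) ℝ) (ζ : L → Fin 2 → ℝ) (KA Ks : ℝ),
        (∀ a b : L, Summable fun p : {c : L // w c = w a} × {d : L // w d = w b} =>
          frobSq (A p.1.1 p.2.1)) →
        (∀ a b : L, (1 + |(w a : ℝ) - (w b : ℝ)|) * (w a : ℝ) ^ β * (w b : ℝ) ^ β *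
          hsBlock w A a b ≤ KA) →
        (Summable fun b : L => vec2NormSq (ζ b) * (w b : ℝ) ^ (2 * s)) →
        Real.sqrt (∑' b : L, vec2NormSq (ζ b) * (w b : ℝ) ^ (2 * s)) ≤ Ks →
        (∀ c : L, ∀ i : Fin 2, Summable fun e : L => |(A c e).mulVec (ζ e) i|) ∧
        (∀ a : L,
          (w a : ℝ) ^ β *
              Real.sqrt (∑' b : {b : L // w b = w a}, vec2NormSq (infMulVec A ζ b.1)) ≤
            C * KA * Ks) := by
  refine ⟨Real.sqrt (2 * Sg), Real.sqrt_pos.2 (by linarith [one_le_Sg]), ?_⟩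
  intro s hs L _ w hw A ζ KA Ks hAsum hKA hζsum hζ
  have hw1 : ∀ e : L, (1:ℝ) ≤ (w e : ℝ) := fun e => by exact_mod_cast hw e
  have hwpos : ∀ e : L, (0:ℝ) < (w e : ℝ) := fun e => lt_of_lt_of_le one_pos (hw1 e)
  have hKs0 : 0 ≤ Ks := le_trans (Real.sqrt_nonneg _) hζ
  have hβ1 : ∀ e : L, (1:ℝ) ≤ (w e : ℝ) ^ β := fun e => Real.one_le_rpow (hw1 e) hβ.le
  have hus : ∀ e : L, (0:ℝ) < (w e : ℝ) ^ (-s) := fun e => Real.rpow_pos_of_pos (hwpos e) _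
  have hus1 : ∀ e : L, (w e : ℝ) ^ (-s) ≤ 1 :=
    fun e => Real.rpow_le_one_of_one_le_of_nonpos (hw1 e) (neg_nonpos.2 hs)
  have hFnn : ∀ (c e : L), 0 ≤ frobSq (A c e) * ((w e : ℝ) ^ (-s)) ^ 2 :=
    fun c e => mul_nonneg (frobSq_nonneg _) (sq_nonneg _)
  -- regrouping of sums over L by energy level
  have regroup : ∀ h : L → ENNReal,
      ∑' e : L, h e = ∑' (n : ℕ) (e : {e : L // w e = n}), h e.1 := by
    intro h
    rw [← Equiv.tsum_eq (Equiv.sigmaFiberEquiv w) h]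
    exact ENNReal.tsum_sigma fun n (e : {e : L // w e = n}) => h e.1
  -- the key per-block estimate
  have key : ∀ a : L,
      (∀ b : {b : L // w b = w a},
        Summable fun e : L => frobSq (A b.1 e) * ((w e : ℝ) ^ (-s)) ^ 2) ∧
      Summable (fun b : {b : L // w b = w a} =>
        ∑' e : L, frobSq (A b.1 e) * ((w e : ℝ) ^ (-s)) ^ 2) ∧
      ∑' b : {b : L // w b = w a}, ∑' e : L, frobSq (A b.1 e) * ((w e : ℝ) ^ (-s)) ^ 2
        ≤ KA ^ 2 * (((w a : ℝ) ^ β) ^ 2)⁻¹ * Sg := by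
    intro a
    set Mβ : ℝ := (w a : ℝ) ^ β with hMβdef
    have hMβ1 : (1:ℝ) ≤ Mβ := hβ1 a
    set F : {b : L // w b = w a} → L → ENNReal :=
      fun b e => ENNReal.ofReal (frobSq (A b.1 e) * ((w e : ℝ) ^ (-s)) ^ 2) with hF
    have hΨle : (∑' b : {b : L // w b = w a}, ∑' e : L, F b e)
        ≤ ENNReal.ofReal (KA ^ 2 * (Mβ ^ 2)⁻¹ * Sg) := by
      have hre : (∑' b : {b : L // w b = w a}, ∑' e : L, F b e)
          = ∑' n : ℕ, ENNReal.ofReal (((n : ℝ) ^ (-s)) ^ 2) *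
              ∑' (b : {b : L // w b = w a}) (e : {e : L // w e = n}),
                ENNReal.ofReal (frobSq (A b.1 e.1)) := by
        calc (∑' b : {b : L // w b = w a}, ∑' e : L, F b e)
            = ∑' (b : {b : L // w b = w a}) (n : ℕ) (e : {e : L // w e = n}), F b e.1 :=
              tsum_congr fun b => regroup _
          _ = ∑' (n : ℕ) (b : {b : L // w b = w a}) (e : {e : L // w e = n}), F b e.1 :=
              ENNReal.tsum_comm
          _ = _ := by
              refine tsum_congr fun n => ?_
              have hbb : ∀ b : {b : L // w b = w a},
                  (∑' e : {e : L // w e = n}, F b e.1)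
                  = ENNReal.ofReal (((n : ℝ) ^ (-s)) ^ 2) *
                    ∑' e : {e : L // w e = n}, ENNReal.ofReal (frobSq (A b.1 e.1)) := by
                intro b
                rw [← ENNReal.tsum_mul_left]
                refine tsum_congr fun e => ?_
                rw [hF]; dsimp only
                rw [e.2, mul_comm, ENNReal.ofReal_mul (sq_nonneg _)]
              rw [tsum_congr hbb, ENNReal.tsum_mul_left]
      have hterm : ∀ n : ℕ, ENNReal.ofReal (((n : ℝ) ^ (-s)) ^ 2) *
          (∑' (b : {b : L // w b = w a}) (e : {e : L // w e = n}),
            ENNReal.ofReal (frobSq (A b.1 e.1)))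
          ≤ ENNReal.ofReal (KA ^ 2 * (Mβ ^ 2)⁻¹ * ((1 + |(w a : ℝ) - (n : ℝ)|) ^ 2)⁻¹) := by
        intro n
        by_cases hex : ∃ d : L, w d = n
        · obtain ⟨d, hd⟩ := hex
          subst hd
          have hP : (∑' (b : {b : L // w b = w a}) (e : {e : L // w e = w d}),
              ENNReal.ofReal (frobSq (A b.1 e.1)))
              = ENNReal.ofReal ((hsBlock w A a d) ^ 2) := by
            rw [← ENNReal.tsum_prod,
              ← ENNReal.ofReal_tsum_of_nonneg (fun p => frobSq_nonneg _) (hAsum a d)]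
            congr 1
            rw [hsBlock, Real.sq_sqrt (tsum_nonneg fun p => frobSq_nonneg _)]
          rw [hP, ← ENNReal.ofReal_mul (sq_nonneg _)]
          apply ENNReal.ofReal_le_ofReal
          set N : ℝ := (w d : ℝ) with hN
          set Nβ : ℝ := N ^ β with hNβ
          set D : ℝ := 1 + |(w a : ℝ) - N| with hD
          set hsb : ℝ := hsBlock w A a d with hhsb
          have hD1 : (1:ℝ) ≤ D := le_add_of_nonneg_right (abs_nonneg _)
          have hNβ1 : (1:ℝ) ≤ Nβ := hβ1 d
          have hhs0 : 0 ≤ hsb := Real.sqrt_nonneg _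
          have hb : D * Mβ * Nβ * hsb ≤ KA := hKA a d
          have hq : (D * Mβ * Nβ * hsb) ^ 2 ≤ KA ^ 2 :=
            pow_le_pow_left₀ (by positivity) hb 2
          have hu2 : (N ^ (-s)) ^ 2 ≤ 1 := by nlinarith [hus1 d, (hus d).le]
          have hmain : (N ^ (-s)) ^ 2 * hsb ^ 2 ≤ KA ^ 2 / (Mβ ^ 2 * D ^ 2) := by
            rw [le_div_iff₀ (by positivity)]
            have t1 : (N ^ (-s)) ^ 2 ≤ Nβ ^ 2 := by nlinarith [hu2, hNβ1]
            nlinarith [hq, mul_le_mul_of_nonneg_right t1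
              (by positivity : (0:ℝ) ≤ hsb ^ 2 * (Mβ ^ 2 * D ^ 2)), sq_nonneg (N ^ (-s))]
          calc (N ^ (-s)) ^ 2 * hsb ^ 2 ≤ KA ^ 2 / (Mβ ^ 2 * D ^ 2) := hmain
            _ = KA ^ 2 * (Mβ ^ 2)⁻¹ * (D ^ 2)⁻¹ := by rw [div_eq_mul_inv, mul_inv, mul_assoc]
        · have hempty : IsEmpty {e : L // w e = n} := ⟨fun e => hex ⟨e.1, e.2⟩⟩
          have : (∑' (b : {b : L // w b = w a}) (e : {e : L // w e = n}),
              ENNReal.ofReal (frobSq (A b.1 e.1))) = 0 := by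
            simp [tsum_empty]
          rw [this, mul_zero]
          exact zero_le
      calc (∑' b : {b : L // w b = w a}, ∑' e : L, F b e)
          = _ := hre
        _ ≤ ∑' n : ℕ, ENNReal.ofReal (KA ^ 2 * (Mβ ^ 2)⁻¹ *
              ((1 + |(w a : ℝ) - (n : ℝ)|) ^ 2)⁻¹) := ENNReal.tsum_le_tsum hterm
        _ = ∑' n : ℕ, ENNReal.ofReal (KA ^ 2 * (Mβ ^ 2)⁻¹) *
              ENNReal.ofReal ((1 + |(w a : ℝ) - (n : ℝ)|) ^ 2)⁻¹ := by
            refine tsum_congr fun n => ?_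
            rw [ENNReal.ofReal_mul (by positivity)]
        _ = ENNReal.ofReal (KA ^ 2 * (Mβ ^ 2)⁻¹) *
              ∑' n : ℕ, ENNReal.ofReal ((1 + |(w a : ℝ) - (n : ℝ)|) ^ 2)⁻¹ :=
            ENNReal.tsum_mul_left
        _ ≤ ENNReal.ofReal (KA ^ 2 * (Mβ ^ 2)⁻¹) * ENNReal.ofReal Sg :=
            mul_le_mul_right (tsum_shift_le (w a)) _
        _ = ENNReal.ofReal (KA ^ 2 * (Mβ ^ 2)⁻¹ * Sg) :=
            (ENNReal.ofReal_mul (by positivity)).symm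
    have hΨtop : (∑' b : {b : L // w b = w a}, ∑' e : L, F b e) ≠ ⊤ :=
      ne_top_of_le_ne_top ENNReal.ofReal_ne_top hΨle
    have hrow : ∀ b : {b : L // w b = w a},
        Summable fun e : L => frobSq (A b.1 e) * ((w e : ℝ) ^ (-s)) ^ 2 := by
      intro b
      have hbtop : (∑' e : L, F b e) ≠ ⊤ :=
        ne_top_of_le_ne_top hΨtop (ENNReal.le_tsum b)
      refine (ENNReal.summable_toReal hbtop).congr fun e => ?_
      rw [hF]; exact ENNReal.toReal_ofReal (hFnn b.1 e)
    have hofRow : ∀ b : {b : L // w b = w a}, (∑' e : L, F b e)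
        = ENNReal.ofReal (∑' e : L, frobSq (A b.1 e) * ((w e : ℝ) ^ (-s)) ^ 2) :=
      fun b => (ENNReal.ofReal_tsum_of_nonneg (fun e => hFnn b.1 e) (hrow b)).symm
    have hrow2 : Summable (fun b : {b : L // w b = w a} =>
        ∑' e : L, frobSq (A b.1 e) * ((w e : ℝ) ^ (-s)) ^ 2) := by
      refine (ENNReal.summable_toReal hΨtop).congr fun b => ?_
      rw [hofRow b, ENNReal.toReal_ofReal (tsum_nonneg fun e => hFnn b.1 e)]
    refine ⟨hrow, hrow2, ?_⟩
    have heq : (∑' b : {b : L // w b = w a},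
        ∑' e : L, frobSq (A b.1 e) * ((w e : ℝ) ^ (-s)) ^ 2)
        = (∑' b : {b : L // w b = w a}, ∑' e : L, F b e).toReal := by
      rw [ENNReal.tsum_toReal_eq (fun b => by rw [hofRow b]; exact ENNReal.ofReal_ne_top)]
      refine tsum_congr fun b => ?_
      rw [hofRow b, ENNReal.toReal_ofReal (tsum_nonneg fun e => hFnn b.1 e)]
    rw [heq]
    have := ENNReal.toReal_mono ENNReal.ofReal_ne_top hΨle
    rwa [ENNReal.toReal_ofReal (mul_nonneg (by positivity) Sg_nonneg)] at this
  -- per-row consequences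
  have hg0 : ∀ e : L, 0 ≤ Real.sqrt (vec2NormSq (ζ e)) * (w e : ℝ) ^ s :=
    fun e => mul_nonneg (Real.sqrt_nonneg _) (Real.rpow_pos_of_pos (hwpos e) s).le
  have hg2 : Summable fun e : L => (Real.sqrt (vec2NormSq (ζ e)) * (w e : ℝ) ^ s) ^ 2 := by
    refine hζsum.congr fun e => ?_
    rw [mul_pow, Real.sq_sqrt (vec2NormSq_nonneg _)]
    congr 1
    rw [← Real.rpow_natCast ((w e : ℝ) ^ s) 2, ← Real.rpow_mul (hwpos e).le]
    norm_num [mul_comm]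
  have hg2sum : ∑' e : L, (Real.sqrt (vec2NormSq (ζ e)) * (w e : ℝ) ^ s) ^ 2
      = ∑' b : L, vec2NormSq (ζ b) * (w b : ℝ) ^ (2 * s) := by
    refine tsum_congr fun e => ?_
    rw [mul_pow, Real.sq_sqrt (vec2NormSq_nonneg _)]
    congr 1
    rw [← Real.rpow_natCast ((w e : ℝ) ^ s) 2, ← Real.rpow_mul (hwpos e).le]
    norm_num [mul_comm]
  have main : ∀ c : L,
      (∀ i : Fin 2, Summable fun e : L => |(A c e).mulVec (ζ e) i|) ∧
      (∀ i : Fin 2, |infMulVec A ζ c i| ≤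
        Real.sqrt (∑' e : L, frobSq (A c e) * ((w e : ℝ) ^ (-s)) ^ 2) * Ks) := by
    intro c
    have hr : Summable fun e : L => frobSq (A c e) * ((w e : ℝ) ^ (-s)) ^ 2 :=
      (key c).1 ⟨c, rfl⟩
    set f : L → ℝ := fun e => Real.sqrt (frobSq (A c e)) * (w e : ℝ) ^ (-s) with hfdef
    set g : L → ℝ := fun e => Real.sqrt (vec2NormSq (ζ e)) * (w e : ℝ) ^ s with hgdef
    have hf0 : ∀ e, 0 ≤ f e := fun e => mul_nonneg (Real.sqrt_nonneg _) (hus e).le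
    have hfsq : ∀ e, f e ^ 2 = frobSq (A c e) * ((w e : ℝ) ^ (-s)) ^ 2 := by
      intro e; rw [hfdef]; dsimp only; rw [mul_pow, Real.sq_sqrt (frobSq_nonneg _)]
    have hf2 : Summable fun e => f e ^ 2 := by
      refine hr.congr fun e => ?_; rw [hfsq e]
    have hfg : ∀ e : L, f e * g e = Real.sqrt (frobSq (A c e)) * Real.sqrt (vec2NormSq (ζ e)) := by
      intro e
      rw [hfdef, hgdef]; dsimp only
      rw [Real.rpow_neg (hwpos e).le]
      have hne : ((w e : ℝ) ^ s) ≠ 0 := ne_of_gt (Real.rpow_pos_of_pos (hwpos e) s)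
      field_simp
    have habs : ∀ (i : Fin 2) (e : L), |(A c e).mulVec (ζ e) i| ≤ f e * g e := by
      intro i e
      rw [hfg e]; exact abs_mulVec_le (A c e) (ζ e) i
    have hsummul : Summable fun e => f e * g e := summable_mul_of_sq hf0 hg0 hf2 hg2
    have hsumabs : ∀ i : Fin 2, Summable fun e : L => |(A c e).mulVec (ζ e) i| :=
      fun i => Summable.of_nonneg_of_le (fun e => abs_nonneg _) (habs i) hsummul
    refine ⟨hsumabs, fun i => ?_⟩
    have h1 : |∑' e : L, (A c e).mulVec (ζ e) i| ≤ ∑' e : L, |(A c e).mulVec (ζ e) i| := by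
      have := norm_tsum_le_tsum_norm (f := fun e : L => (A c e).mulVec (ζ e) i)
        (by simpa [Real.norm_eq_abs] using hsumabs i)
      simpa [Real.norm_eq_abs] using this
    have h2 : ∑' e : L, |(A c e).mulVec (ζ e) i| ≤ ∑' e, f e * g e :=
      Summable.tsum_le_tsum (habs i) (hsumabs i) hsummul
    have h3 := tsum_mul_le_sqrt_mul_sqrt hf0 hg0 hf2 hg2
    have h4 : ∑' e, f e ^ 2 = ∑' e : L, frobSq (A c e) * ((w e : ℝ) ^ (-s)) ^ 2 :=
      tsum_congr fun e => hfsq e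
    have h5 : Real.sqrt (∑' e, g e ^ 2) ≤ Ks := by rw [hg2sum]; exact hζ
    calc |infMulVec A ζ c i| = |∑' e : L, (A c e).mulVec (ζ e) i| := rfl
      _ ≤ ∑' e, f e * g e := h1.trans h2
      _ ≤ Real.sqrt (∑' e, f e ^ 2) * Real.sqrt (∑' e, g e ^ 2) := h3
      _ ≤ Real.sqrt (∑' e : L, frobSq (A c e) * ((w e : ℝ) ^ (-s)) ^ 2) * Ks := by
          rw [h4]
          exact mul_le_mul_of_nonneg_left h5 (Real.sqrt_nonneg _)
  constructor
  · exact fun c => (main c).1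
  · intro a
    obtain ⟨hrow, hrow2, hΨle⟩ := key a
    set Mβ : ℝ := (w a : ℝ) ^ β with hMβdef
    have hMβ1 : (1:ℝ) ≤ Mβ := hβ1 a
    have hMβ0 : (0:ℝ) < Mβ := lt_of_lt_of_le one_pos hMβ1
    have hKA0 : 0 ≤ KA := by
      have h0 : 0 ≤ hsBlock w A a a := Real.sqrt_nonneg _
      exact le_trans (mul_nonneg (by positivity) h0) (hKA a a)
    set Φ : {b : L // w b = w a} → ℝ :=
      fun b => ∑' e : L, frobSq (A b.1 e) * ((w e : ℝ) ^ (-s)) ^ 2 with hΦdef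
    have hΦ0 : ∀ b, 0 ≤ Φ b := fun b => tsum_nonneg fun e => hFnn b.1 e
    have hble : ∀ b : {b : L // w b = w a},
        vec2NormSq (infMulVec A ζ b.1) ≤ 2 * Ks ^ 2 * Φ b := by
      intro b
      have hbd : ∀ i : Fin 2, (infMulVec A ζ b.1 i) ^ 2 ≤ Φ b * Ks ^ 2 := by
        intro i
        have h := (main b.1).2 i
        have h2 : (infMulVec A ζ b.1 i) ^ 2 ≤ (Real.sqrt (Φ b) * Ks) ^ 2 := by
          rw [← sq_abs]
          exact pow_le_pow_left₀ (abs_nonneg _) h 2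
        calc (infMulVec A ζ b.1 i) ^ 2 ≤ (Real.sqrt (Φ b) * Ks) ^ 2 := h2
          _ = Φ b * Ks ^ 2 := by rw [mul_pow, Real.sq_sqrt (hΦ0 b)]
      calc vec2NormSq (infMulVec A ζ b.1)
          = ∑ i : Fin 2, (infMulVec A ζ b.1 i) ^ 2 := rfl
        _ ≤ ∑ _i : Fin 2, Φ b * Ks ^ 2 := Finset.sum_le_sum fun i _ => hbd i
        _ = 2 * Ks ^ 2 * Φ b := by simp [Fin.sum_univ_two]; ring
    have hSigsum : Summable fun b : {b : L // w b = w a} => vec2NormSq (infMulVec A ζ b.1) :=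
      Summable.of_nonneg_of_le (fun b => vec2NormSq_nonneg _) hble (hrow2.mul_left (2 * Ks ^ 2))
    have hSig : ∑' b : {b : L // w b = w a}, vec2NormSq (infMulVec A ζ b.1)
        ≤ 2 * Ks ^ 2 * (KA ^ 2 * (Mβ ^ 2)⁻¹ * Sg) := by
      calc ∑' b : {b : L // w b = w a}, vec2NormSq (infMulVec A ζ b.1)
          ≤ ∑' b : {b : L // w b = w a}, 2 * Ks ^ 2 * Φ b :=
            Summable.tsum_le_tsum hble hSigsum (hrow2.mul_left (2 * Ks ^ 2))
        _ = 2 * Ks ^ 2 * ∑' b, Φ b := tsum_mul_left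
        _ ≤ 2 * Ks ^ 2 * (KA ^ 2 * (Mβ ^ 2)⁻¹ * Sg) :=
            mul_le_mul_of_nonneg_left hΨle (by positivity)
    set Sa : ℝ := ∑' b : {b : L // w b = w a}, vec2NormSq (infMulVec A ζ b.1) with hSa
    have hSa0 : 0 ≤ Sa := tsum_nonneg fun b => vec2NormSq_nonneg _
    have hsq : Mβ ^ 2 * Sa ≤ 2 * Sg * (KA * Ks) ^ 2 := by
      have h := mul_le_mul_of_nonneg_left hSig (by positivity : (0:ℝ) ≤ Mβ ^ 2)
      have hcancel : Mβ ^ 2 * (2 * Ks ^ 2 * (KA ^ 2 * (Mβ ^ 2)⁻¹ * Sg))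
          = 2 * Sg * (KA * Ks) ^ 2 := by
        field_simp
      linarith [h, hcancel.symm.le]
    calc Mβ * Real.sqrt Sa = Real.sqrt (Mβ ^ 2) * Real.sqrt Sa := by
          rw [Real.sqrt_sq hMβ0.le]
      _ = Real.sqrt (Mβ ^ 2 * Sa) := (Real.sqrt_mul (sq_nonneg _) _).symm
      _ ≤ Real.sqrt (2 * Sg * (KA * Ks) ^ 2) := Real.sqrt_le_sqrt hsq
      _ = Real.sqrt (2 * Sg) * (KA * Ks) := by
          rw [Real.sqrt_mul (by linarith [Sg_nonneg] : (0:ℝ) ≤ 2 * Sg),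
            Real.sqrt_sq (mul_nonneg hKA0 hKs0)]
      _ = Real.sqrt (2 * Sg) * KA * Ks := by ring
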